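/- Let p ≥ 1 and let r̄, r0 be integers with 0 ≤ r̄ ≤ r0. Let F : ℝ^p → ℝ be a polynomial function of total degree at most r̄. Then for every φ ∈ ℝ^p: Σ_{γ ∈ ℕ₀^p, |γ| ≤ r0} |∂^γ F(φ)|/γ! ≤ (1 + ‖φ‖_∞)^{r̄} · Σ_{γ ∈ ℕ₀^p, |γ| ≤ r0} |∂^γ F(0)|/γ!, where ‖φ‖_∞ = max_{1≤j≤p} |φ_j|. -/

import Mathlib

open scoped BigOperators

/-- Partial derivative in the `i`-th coordinate direction. -/
noncomputable def pd1 {n : ℕ} (i : Fin n) (f : (Fin n → ℝ) → ℝ) : (Fin n → ℝ) → ℝ :=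
  fun z => fderiv ℝ f z (Pi.single i 1)

/-- Iterated partial derivative in one coordinate direction. -/
noncomputable def pdPow {n : ℕ} (i : Fin n) : ℕ → ((Fin n → ℝ) → ℝ) → (Fin n → ℝ) → ℝ
  | 0, f => f
  | k + 1, f => pd1 i (pdPow i k f)

/-- Multiindex partial derivative `∂^α`. -/
noncomputable def pdMulti {n : ℕ} (α : Fin n → ℕ) (f : (Fin n → ℝ) → ℝ) : (Fin n → ℝ) → ℝ :=
  (List.finRange n).foldr (fun i g => pdPow i (α i) g) f

/-- Multiindex factorial `α! = α₁! ⋯ αₙ!`. -/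
def mfact {n : ℕ} (α : Fin n → ℕ) : ℕ := ∏ i, Nat.factorial (α i)

/-- The truncated Taylor norm `|f|_{T_z} = ∑_{|α| ≤ r0} |∂^α f(z)| / α!`. -/
noncomputable def taylorNorm {n : ℕ} (r0 : ℕ) (f : (Fin n → ℝ) → ℝ) (z : Fin n → ℝ) : ℝ :=
  ∑ α ∈ (Finset.Iic (fun _ : Fin n => r0)).filter (fun α => ∑ i, α i ≤ r0),
    |pdMulti α f z| / ((mfact α : ℕ) : ℝ)

open MvPolynomial in
lemma hasFDerivAt_evalP {p : ℕ} (P : MvPolynomial (Fin p) ℝ) (z : Fin p → ℝ) :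
    HasFDerivAt (fun x : Fin p → ℝ => eval x P)
      (∑ i, eval z (pderiv i P) • (ContinuousLinearMap.proj i : (Fin p → ℝ) →L[ℝ] ℝ)) z := by
  induction P using MvPolynomial.induction_on with
  | C a =>
      simp only [eval_C, pderiv_C, map_zero, zero_smul, Finset.sum_const_zero]
      exact hasFDerivAt_const a z
  | add f g hf hg =>
      simp only [map_add]
      refine (hf.add hg).congr_fderiv ?_
      simp [add_smul, Finset.sum_add_distrib]
  | mul_X f j hf =>
      have hXj : HasFDerivAt (fun x : Fin p → ℝ => x j)
          (ContinuousLinearMap.proj j : (Fin p → ℝ) →L[ℝ] ℝ) z :=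
        (ContinuousLinearMap.proj j : (Fin p → ℝ) →L[ℝ] ℝ).hasFDerivAt
      have := hf.mul hXj
      simp only [map_mul, eval_X] at this ⊢
      refine this.congr_fderiv ?_
      symm
      have : ∀ i : Fin p, eval z (pderiv i (f * X j)) =
          eval z (pderiv i f) * z j + eval z f * (if j = i then 1 else 0) := by
        intro i
        rw [pderiv_mul]
        classical
        rw [pderiv_X]
        simp [Pi.single_apply, apply_ite (eval z)]
      simp only [this, add_smul, Finset.sum_add_distrib, mul_smul, ite_smul, one_smul, zero_smul,
        smul_ite, smul_zero]
      rw [Finset.sum_ite_eq Finset.univ j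
        (fun i => eval z f • (ContinuousLinearMap.proj i : (Fin p → ℝ) →L[ℝ] ℝ))]
      simp [Finset.smul_sum, smul_smul, mul_comm, add_comm]

open MvPolynomial in
lemma pd1_eval {p : ℕ} (i : Fin p) (P : MvPolynomial (Fin p) ℝ) :
    pd1 i (fun x => eval x P) = fun z => eval z (pderiv i P) := by
  funext z
  have h := hasFDerivAt_evalP P z
  rw [pd1, h.fderiv]
  classical
  simp [Pi.single_apply, mul_ite, Finset.sum_ite_eq']

open MvPolynomial in
lemma pdPow_eval {p : ℕ} (i : Fin p) (k : ℕ) (P : MvPolynomial (Fin p) ℝ) :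
    pdPow i k (fun x => eval x P) = fun z => eval z ((fun Q => pderiv i Q)^[k] P) := by
  induction k generalizing P with
  | zero => rfl
  | succ k ih =>
      rw [pdPow, ih, Function.iterate_succ_apply']
      exact pd1_eval i _

/-- Polynomial-level multiindex derivative. -/
noncomputable def DP {p : ℕ} (α : Fin p → ℕ) (P : MvPolynomial (Fin p) ℝ) :
    MvPolynomial (Fin p) ℝ :=
  (List.finRange p).foldr (fun i Q => (fun R => MvPolynomial.pderiv i R)^[α i] Q) P

open MvPolynomial in
lemma pdMulti_eval {p : ℕ} (α : Fin p → ℕ) (P : MvPolynomial (Fin p) ℝ) :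
    pdMulti α (fun x => eval x P) = fun z => eval z (DP α P) := by
  rw [pdMulti, DP]
  induction List.finRange p generalizing P with
  | nil => rfl
  | cons i t ih =>
      simp only [List.foldr_cons]
      rw [ih, pdPow_eval]

open MvPolynomial in
lemma iter_pderiv_monomial {p : ℕ} (i : Fin p) (k : ℕ) (s : Fin p →₀ ℕ) (c : ℝ) :
    (fun R => pderiv i R)^[k] (monomial s c)
      = monomial (s - Finsupp.single i k) (c * (s i).descFactorial k) := by
  induction k with
  | zero => simp
  | succ k ih =>
      rw [Function.iterate_succ_apply', ih, pderiv_monomial]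
      have h1 : s - Finsupp.single i k - Finsupp.single i 1 = s - Finsupp.single i (k+1) := by
        ext j
        simp only [Finsupp.tsub_apply, Finsupp.single_apply]
        by_cases hj : i = j
        · subst hj; simp [Nat.sub_sub]
        · simp only [if_neg hj, Nat.sub_zero]
      have h2 : (s - Finsupp.single i k) i = s i - k := by simp
      rw [h1, h2, Nat.descFactorial_succ]
      push_cast
      ring_nf

open MvPolynomial in
lemma listsum_single_apply {p : ℕ} (α : Fin p → ℕ) :
    ∀ l : List (Fin p), l.Nodup → ∀ j,
      ((l.map fun i => Finsupp.single i (α i)).sum) j = if j ∈ l then α j else 0 := by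
  intro l
  induction l with
  | nil => intro _ j; simp
  | cons i t ih =>
      intro hl j
      simp only [List.map_cons, List.sum_cons, Finsupp.add_apply,
        ih hl.of_cons j, List.mem_cons]
      rcases eq_or_ne j i with rfl | hj
      · simp [(List.nodup_cons.mp hl).1]
      · simp [Finsupp.single_apply, (Ne.symm hj), hj]

open MvPolynomial in
lemma foldr_monomial {p : ℕ} (α : Fin p → ℕ) (c : ℝ) :
    ∀ (l : List (Fin p)), l.Nodup → ∀ (β : Fin p →₀ ℕ),
      l.foldr (fun i Q => (fun R => pderiv i R)^[α i] Q) (monomial β c)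
        = monomial (β - (l.map fun i => Finsupp.single i (α i)).sum)
            (c * (l.map fun i => ((β i).descFactorial (α i) : ℝ)).prod) := by
  intro l
  induction l with
  | nil => intro _ β; simp
  | cons i t ih =>
      intro hl β
      simp only [List.foldr_cons, ih hl.of_cons β, iter_pderiv_monomial, List.map_cons,
        List.sum_cons, List.prod_cons]
      have hSt : ((t.map fun j => Finsupp.single j (α j)).sum) i = 0 := by
        rw [listsum_single_apply α t hl.of_cons i, if_neg (List.nodup_cons.mp hl).1]
      have hβ : (β - (t.map fun j => Finsupp.single j (α j)).sum) i = β i := by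
        rw [Finsupp.tsub_apply, hSt, Nat.sub_zero]
      rw [hβ, tsub_tsub]
      congr 1
      · rw [add_comm]
      · ring

open MvPolynomial in
lemma iter_pderiv_add {p : ℕ} (i : Fin p) (k : ℕ) (A B : MvPolynomial (Fin p) ℝ) :
    (fun R => pderiv i R)^[k] (A + B)
      = (fun R => pderiv i R)^[k] A + (fun R => pderiv i R)^[k] B := by
  induction k generalizing A B with
  | zero => rfl
  | succ k ih => simp only [Function.iterate_succ_apply, map_add, ih]

open MvPolynomial in
lemma iter_pderiv_zero {p : ℕ} (i : Fin p) (k : ℕ) :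
    (fun R => pderiv i R)^[k] (0 : MvPolynomial (Fin p) ℝ) = 0 := by
  induction k with
  | zero => rfl
  | succ k ih => rw [Function.iterate_succ_apply, map_zero, ih]

open MvPolynomial in
lemma DP_add {p : ℕ} (α : Fin p → ℕ) (A B : MvPolynomial (Fin p) ℝ) :
    DP α (A + B) = DP α A + DP α B := by
  rw [DP, DP, DP]
  induction List.finRange p generalizing A B with
  | nil => rfl
  | cons i t ih => simp only [List.foldr_cons, ih, iter_pderiv_add]

open MvPolynomial in
lemma DP_zero {p : ℕ} (α : Fin p → ℕ) : DP α (0 : MvPolynomial (Fin p) ℝ) = 0 := by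
  rw [DP]
  induction List.finRange p with
  | nil => rfl
  | cons i t ih => simp only [List.foldr_cons, ih, iter_pderiv_zero]

open MvPolynomial in
lemma DP_monomial {p : ℕ} (α : Fin p → ℕ) (β : Fin p →₀ ℕ) (c : ℝ) :
    DP α (monomial β c) = monomial (β - Finsupp.equivFunOnFinite.symm α)
      (c * ∏ i, ((β i).descFactorial (α i) : ℝ)) := by
  rw [DP, foldr_monomial α c (List.finRange p) (List.nodup_finRange p) β]
  have he : ((List.finRange p).map fun i => Finsupp.single i (α i)).sum
      = Finsupp.equivFunOnFinite.symm α := by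
    ext j
    rw [listsum_single_apply α (List.finRange p) (List.nodup_finRange p) j,
      if_pos (List.mem_finRange j)]
    simp
  have hc : ((List.finRange p).map fun i => ((β i).descFactorial (α i) : ℝ)).prod
      = ∏ i, ((β i).descFactorial (α i) : ℝ) := (Fin.prod_univ_def _).symm
  rw [he, hc]

open MvPolynomial in
lemma DP_sum {p : ℕ} (α : Fin p → ℕ) {ι : Type*} (s : Finset ι)
    (f : ι → MvPolynomial (Fin p) ℝ) :
    DP α (∑ b ∈ s, f b) = ∑ b ∈ s, DP α (f b) := by
  classical
  induction s using Finset.induction_on with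
  | empty => simpa using DP_zero α
  | insert b s hb ih => rw [Finset.sum_insert hb, Finset.sum_insert hb, DP_add, ih]

open MvPolynomial in
lemma eval_DP {p : ℕ} (α : Fin p → ℕ) (P : MvPolynomial (Fin p) ℝ) (φ : Fin p → ℝ) :
    eval φ (DP α P) = ∑ β ∈ P.support, coeff β P
      * (∏ i, ((β i).descFactorial (α i) : ℝ)) * ∏ i, φ i ^ (β i - α i) := by
  conv_lhs => rw [← support_sum_monomial_coeff P]
  rw [DP_sum, map_sum]
  refine Finset.sum_congr rfl fun β _ => ?_
  rw [DP_monomial, eval_monomial]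
  rw [Finsupp.prod_fintype _ _ (fun i => pow_zero (φ i))]
  have h : ∀ i : Fin p, (β - Finsupp.equivFunOnFinite.symm α) i = β i - α i := by
    intro i; rw [Finsupp.tsub_apply]; simp
  simp only [h]

open MvPolynomial in
theorem stmt17' (p r0 rbar : ℕ) (hp : 1 ≤ p) (hr : rbar ≤ r0)
    (F : (Fin p → ℝ) → ℝ) (P : MvPolynomial (Fin p) ℝ)
    (hdeg : P.totalDegree ≤ rbar) (hFP : ∀ x, F x = MvPolynomial.eval x P)
    (φ : Fin p → ℝ) :
    taylorNorm r0 F φ ≤ (1 + ‖φ‖) ^ rbar * taylorNorm r0 F 0 := by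
  classical
  have hFeq : F = fun x => eval x P := funext hFP
  set S : Finset (Fin p → ℕ) :=
    (Finset.Iic (fun _ : Fin p => r0)).filter (fun α => ∑ i, α i ≤ r0) with hSdef
  have hpd : ∀ (α : Fin p → ℕ) (z : Fin p → ℝ), pdMulti α F z = eval z (DP α P) := by
    intro α z; rw [hFeq, pdMulti_eval]
  have hsum_le : ∀ β ∈ P.support, (∑ i, β i) ≤ rbar := by
    intro β hβ
    have h1 := MvPolynomial.le_totalDegree hβ
    have h2 : β.sum (fun _ e => e) = ∑ i, β i := Finsupp.sum_fintype _ _ (fun _ => rfl)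
    rw [h2] at h1
    exact h1.trans hdeg
  have hmfact_pos : ∀ α : Fin p → ℕ, (0:ℝ) < (mfact α : ℝ) := by
    intro α
    have : 0 < mfact α := Finset.prod_pos fun i _ => Nat.factorial_pos (α i)
    exact_mod_cast this
  -- value at 0
  have hzero : ∀ α : Fin p → ℕ,
      eval (0 : Fin p → ℝ) (DP α P)
        = coeff (Finsupp.equivFunOnFinite.symm α) P * (mfact α : ℝ) := by
    intro α
    rw [eval_DP]
    rw [Finset.sum_eq_single (Finsupp.equivFunOnFinite.symm α)]
    · simp [Finsupp.equivFunOnFinite_symm_apply_apply, Nat.descFactorial_self, mfact,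
        Nat.cast_prod, Pi.zero_apply]
    · intro b _ hne
      have hex : ∃ i, b i ≠ α i := by
        by_contra h
        push_neg at h
        exact hne (Finsupp.ext fun i => by
          rw [h i, Finsupp.equivFunOnFinite_symm_apply_apply])
      obtain ⟨i, hi⟩ := hex
      rcases lt_or_gt_of_ne hi with hlt | hgt
      · have hz : (∏ j, ((b j).descFactorial (α j) : ℝ)) = 0 :=
          Finset.prod_eq_zero (Finset.mem_univ i)
            (by rw [Nat.descFactorial_eq_zero_iff_lt.mpr hlt]; norm_num)
        rw [hz, mul_zero, zero_mul]
      · refine mul_eq_zero_of_right _ (Finset.prod_eq_zero (Finset.mem_univ i) ?_)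
        simp [Pi.zero_apply, zero_pow (Nat.sub_ne_zero_of_lt hgt)]
    · intro hnot
      rw [MvPolynomial.notMem_support_iff.mp hnot]
      ring
  -- RHS formula
  have hT0 : taylorNorm r0 F 0 = ∑ α ∈ S, |coeff (Finsupp.equivFunOnFinite.symm α) P| := by
    rw [taylorNorm]
    refine Finset.sum_congr rfl fun α hα => ?_
    rw [hpd, hzero, abs_mul, abs_of_pos (hmfact_pos α), mul_div_assoc,
      div_self (ne_of_gt (hmfact_pos α)), mul_one]
  have hmemS : ∀ β ∈ P.support, (⇑β : Fin p → ℕ) ∈ S := by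
    intro β hβ
    rw [hSdef, Finset.mem_filter, Finset.mem_Iic]
    constructor
    · intro i
      exact le_trans (Finset.single_le_sum (f := fun i => β i)
        (fun i _ => Nat.zero_le _) (Finset.mem_univ i)) (le_trans (hsum_le β hβ) hr)
    · exact le_trans (hsum_le β hβ) hr
  have hsupp_le : ∑ β ∈ P.support, |coeff β P| ≤ taylorNorm r0 F 0 := by
    rw [hT0]
    have himg : ∑ β ∈ P.support, |coeff β P|
        = ∑ α ∈ P.support.image (⇑Finsupp.equivFunOnFinite),
            |coeff (Finsupp.equivFunOnFinite.symm α) P| := by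
      rw [Finset.sum_image (fun x _ y _ h => Finsupp.equivFunOnFinite.injective h)]
      refine Finset.sum_congr rfl fun β _ => ?_
      rw [Equiv.symm_apply_apply]
    rw [himg]
    refine Finset.sum_le_sum_of_subset_of_nonneg ?_ (fun _ _ _ => abs_nonneg _)
    intro α hα
    obtain ⟨β, hβ, rfl⟩ := Finset.mem_image.mp hα
    exact hmemS β hβ
  -- descFactorial / mfact / choose
  have hD : ∀ (α : Fin p → ℕ) (β : Fin p →₀ ℕ),
      (∏ i, ((β i).descFactorial (α i) : ℝ))
        = (mfact α : ℝ) * ∏ i, ((β i).choose (α i) : ℝ) := by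
    intro α β
    rw [mfact, Nat.cast_prod, ← Finset.prod_mul_distrib]
    refine Finset.prod_congr rfl fun i _ => ?_
    rw [Nat.descFactorial_eq_factorial_mul_choose]
    push_cast
    ring
  -- step 1 : pointwise bound
  have hstep1 : ∀ α ∈ S, |pdMulti α F φ| / (mfact α : ℝ)
      ≤ ∑ β ∈ P.support, |coeff β P|
          * ∏ i, (((β i).choose (α i) : ℝ) * ‖φ‖ ^ (β i - α i)) := by
    intro α _
    rw [hpd, eval_DP]
    calc |∑ β ∈ P.support, coeff β P * (∏ i, ((β i).descFactorial (α i) : ℝ))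
            * ∏ i, φ i ^ (β i - α i)| / (mfact α : ℝ)
        ≤ (∑ β ∈ P.support, |coeff β P * (∏ i, ((β i).descFactorial (α i) : ℝ))
            * ∏ i, φ i ^ (β i - α i)|) / (mfact α : ℝ) := by
          gcongr
          exact Finset.abs_sum_le_sum_abs _ _
      _ = ∑ β ∈ P.support, |coeff β P * (∏ i, ((β i).descFactorial (α i) : ℝ))
            * ∏ i, φ i ^ (β i - α i)| / (mfact α : ℝ) := Finset.sum_div _ _ _
      _ ≤ ∑ β ∈ P.support, |coeff β P|
            * ∏ i, (((β i).choose (α i) : ℝ) * ‖φ‖ ^ (β i - α i)) := by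
          refine Finset.sum_le_sum fun β _ => ?_
          rw [abs_mul, abs_mul, hD α β]
          have hCnn : (0:ℝ) ≤ ∏ i, ((β i).choose (α i) : ℝ) := by positivity
          have habs : |(mfact α : ℝ) * ∏ i, ((β i).choose (α i) : ℝ)|
              = (mfact α : ℝ) * ∏ i, ((β i).choose (α i) : ℝ) :=
            abs_of_nonneg (by positivity)
          rw [habs]
          have hcancel : |coeff β P| * ((mfact α : ℝ) * ∏ i, ((β i).choose (α i) : ℝ))
              * |∏ i, φ i ^ (β i - α i)| / (mfact α : ℝ)
              = |coeff β P| * (∏ i, ((β i).choose (α i) : ℝ))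
                * |∏ i, φ i ^ (β i - α i)| := by
            field_simp [(hmfact_pos α).ne']
          rw [hcancel, Finset.prod_mul_distrib, ← mul_assoc]
          refine mul_le_mul_of_nonneg_left ?_ (by positivity)
          rw [Finset.abs_prod]
          refine Finset.prod_le_prod (fun i _ => abs_nonneg _) (fun i _ => ?_)
          rw [abs_pow]
          refine pow_le_pow_left₀ (abs_nonneg _) ?_ _
          calc |φ i| = ‖φ i‖ := (Real.norm_eq_abs _).symm
            _ ≤ ‖φ‖ := norm_le_pi_norm φ i
  -- step 3 : per-β sum over α
  have hbig : ∀ β ∈ P.support,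
      (∑ α ∈ S, ∏ i, (((β i).choose (α i) : ℝ) * ‖φ‖ ^ (β i - α i)))
        ≤ (1 + ‖φ‖) ^ rbar := by
    intro β hβ
    have hsub : Finset.Iic (⇑β : Fin p → ℕ) ⊆ S := by
      intro α hα
      rw [Finset.mem_Iic] at hα
      rw [hSdef, Finset.mem_filter, Finset.mem_Iic]
      have hle : ∑ i, α i ≤ ∑ i, β i := Finset.sum_le_sum fun i _ => hα i
      constructor
      · intro i
        exact le_trans (hα i) (le_trans (Finset.single_le_sum (f := fun i => β i)
          (fun i _ => Nat.zero_le _) (Finset.mem_univ i)) (le_trans (hsum_le β hβ) hr))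
      · exact le_trans hle (le_trans (hsum_le β hβ) hr)
    have hvanish : ∀ α ∈ S, α ∉ Finset.Iic (⇑β : Fin p → ℕ) →
        (∏ i, (((β i).choose (α i) : ℝ) * ‖φ‖ ^ (β i - α i))) = 0 := by
      intro α _ hα
      rw [Finset.mem_Iic] at hα
      rw [Pi.le_def] at hα
      push_neg at hα
      obtain ⟨i, hi⟩ := hα
      refine Finset.prod_eq_zero (Finset.mem_univ i) ?_
      rw [Nat.choose_eq_zero_of_lt hi]
      norm_num
    rw [← Finset.sum_subset hsub hvanish]
    have hIic : Finset.Iic (⇑β : Fin p → ℕ)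
        = Fintype.piFinset (fun i => Finset.Iic (β i)) := by
      ext x
      simp [Fintype.mem_piFinset, Pi.le_def]
    rw [hIic, ← Finset.prod_univ_sum (fun i => Finset.Iic (β i))
      (fun i k => (((β i).choose k : ℝ) * ‖φ‖ ^ (β i - k)))]
    have hinner : ∀ n : ℕ,
        (∑ k ∈ Finset.Iic n, ((n.choose k : ℝ) * ‖φ‖ ^ (n - k))) = (1 + ‖φ‖) ^ n := by
      intro n
      have : Finset.Iic n = Finset.range (n + 1) := by
        ext k; simp [Nat.lt_succ_iff]
      rw [this, add_pow]
      refine Finset.sum_congr rfl fun k _ => ?_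
      simp [mul_comm]
    calc (∏ i, ∑ k ∈ Finset.Iic (β i), ((β i).choose k : ℝ) * ‖φ‖ ^ (β i - k))
        = ∏ i, (1 + ‖φ‖) ^ (β i) := by
          refine Finset.prod_congr rfl fun i _ => hinner (β i)
      _ = (1 + ‖φ‖) ^ (∑ i, β i) := Finset.prod_pow_eq_pow_sum _ _ _
      _ ≤ (1 + ‖φ‖) ^ rbar := by
          refine pow_le_pow_right₀ ?_ (hsum_le β hβ)
          have := norm_nonneg φ
          linarith
  -- combine
  calc taylorNorm r0 F φ
      = ∑ α ∈ S, |pdMulti α F φ| / (mfact α : ℝ) := rfl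
    _ ≤ ∑ α ∈ S, ∑ β ∈ P.support, |coeff β P|
          * ∏ i, (((β i).choose (α i) : ℝ) * ‖φ‖ ^ (β i - α i)) :=
        Finset.sum_le_sum hstep1
    _ = ∑ β ∈ P.support, ∑ α ∈ S, |coeff β P|
          * ∏ i, (((β i).choose (α i) : ℝ) * ‖φ‖ ^ (β i - α i)) := Finset.sum_comm
    _ = ∑ β ∈ P.support, |coeff β P|
          * ∑ α ∈ S, ∏ i, (((β i).choose (α i) : ℝ) * ‖φ‖ ^ (β i - α i)) := by
        refine Finset.sum_congr rfl fun β _ => ?_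
        rw [Finset.mul_sum]
    _ ≤ ∑ β ∈ P.support, |coeff β P| * (1 + ‖φ‖) ^ rbar := by
        refine Finset.sum_le_sum fun β hβ => ?_
        exact mul_le_mul_of_nonneg_left (hbig β hβ) (abs_nonneg _)
    _ = (1 + ‖φ‖) ^ rbar * ∑ β ∈ P.support, |coeff β P| := by
        rw [Finset.mul_sum]
        refine Finset.sum_congr rfl fun β _ => mul_comm _ _
    _ ≤ (1 + ‖φ‖) ^ rbar * taylorNorm r0 F 0 := by
        refine mul_le_mul_of_nonneg_left hsupp_le (by positivity)

/-- Polynomial estimate: if `F : ℝ^p → ℝ` is a polynomial function of total degree at most `r̄ ≤ r0`,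
then `∑_{|γ|≤r0} |∂^γ F(φ)|/γ! ≤ (1 + ‖φ‖_∞)^{r̄} ∑_{|γ|≤r0} |∂^γ F(0)|/γ!`. -/
theorem stmt17 (p r0 rbar : ℕ) (hp : 1 ≤ p) (hr : rbar ≤ r0)
    (F : (Fin p → ℝ) → ℝ) (P : MvPolynomial (Fin p) ℝ)
    (hdeg : P.totalDegree ≤ rbar) (hFP : ∀ x, F x = MvPolynomial.eval x P)
    (φ : Fin p → ℝ) :
    taylorNorm r0 F φ ≤ (1 + ‖φ‖) ^ rbar * taylorNorm r0 F 0 :=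
  stmt17' p r0 rbar hp hr F P hdeg hFP φ
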